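/- Let φₙ be the Hermite functions and define, for n, n' ∈ ℕ, s, s' ∈ ℝ and ε > 0, the kernel sum S = Σ_{n=0}^∞ (φₙφ₀)^∧(ξ) conj((φₙφ₀)^∧(ξ')) e^{-i(n+1/2)(s'-s)/ε}. Then S = (2π)^{-1} ⟨e^{-iξ'·}φ₀, U((s'-s)/ε) e^{-iξ·}φ₀⟩, where U is the harmonic oscillator propagator; in particular |S| ≤ (2π)^{-1} for all ξ, ξ', s, s', ε. -/

import Mathlib

open MeasureTheory

/-- The physicists' Hermite functions (orthonormal eigenfunctions of
`h = -(1/2)Δ + (1/2)y²` with eigenvalue `n+1/2`). -/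
noncomputable def hermiteFun (n : ℕ) (y : ℝ) : ℝ :=
  ((2:ℝ) ^ n * n.factorial * Real.sqrt Real.pi) ^ (-(1:ℝ)/2) * (2:ℝ) ^ ((n:ℝ)/2) *
    (Polynomial.aeval (Real.sqrt 2 * y) (Polynomial.hermite n)) * Real.exp (-(y^2)/2)

/-- The Fourier transform `f̂(ξ) = (2π)^{-1/2} ∫ f(y) e^{-iyξ} dy`. -/
noncomputable def ft (f : ℝ → ℂ) (ξ : ℝ) : ℂ :=
  ((Real.sqrt (2 * Real.pi) : ℂ))⁻¹ * ∫ y : ℝ, Complex.exp (-Complex.I * ξ * y) * f y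

/-- The kernel sum
`S = Σₙ (φₙφ₀)^∧(ξ) conj((φₙφ₀)^∧(ξ')) e^{-i(n+1/2)(s'-s)/ε}` converges and equals
`(2π)⁻¹ ⟨e^{-iξ'·}φ₀, U((s'-s)/ε) e^{-iξ·}φ₀⟩`, where `U` is the harmonic oscillator
propagator; in particular `|S| ≤ (2π)⁻¹`. -/
theorem kernel_sum_propagator (ε s s' ξ ξ' : ℝ) (hε : 0 < ε)
    (φ : ℕ → Lp ℂ 2 (volume : Measure ℝ))
    (hφ : ∀ n, (φ n : ℝ → ℂ) =ᵐ[volume] fun y => (hermiteFun n y : ℂ))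
    (hON : Orthonormal ℂ φ)
    (hTot : (Submodule.span ℂ (Set.range φ)).topologicalClosure = ⊤)
    (U : ℝ → Lp ℂ 2 (volume : Measure ℝ) →L[ℂ] Lp ℂ 2 (volume : Measure ℝ))
    (hUiso : ∀ t f, ‖U t f‖ = ‖f‖)
    (hU : ∀ (t : ℝ) (n : ℕ), U t (φ n) = Complex.exp (-Complex.I * ((n:ℂ) + 1/2) * t) • φ n)
    (M : ℝ → Lp ℂ 2 (volume : Measure ℝ) →L[ℂ] Lp ℂ 2 (volume : Measure ℝ))
    (hM : ∀ (c : ℝ) (f : Lp ℂ 2 (volume : Measure ℝ)),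
      (M c f : ℝ → ℂ) =ᵐ[volume] fun y => Complex.exp (-Complex.I * c * y) * f y) :
    HasSum (fun n : ℕ =>
        ft (fun y => (hermiteFun n y : ℂ) * (hermiteFun 0 y : ℂ)) ξ *
          (starRingEnd ℂ) (ft (fun y => (hermiteFun n y : ℂ) * (hermiteFun 0 y : ℂ)) ξ') *
          Complex.exp (-Complex.I * ((n:ℂ) + 1/2) * (((s' - s) / ε : ℝ) : ℂ)))
      (((2 * Real.pi : ℝ) : ℂ)⁻¹ *
        (inner ℂ (M ξ' (φ 0)) (U ((s' - s) / ε) (M ξ (φ 0))) : ℂ)) ∧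
    ‖((2 * Real.pi : ℝ) : ℂ)⁻¹ *
        (inner ℂ (M ξ' (φ 0)) (U ((s' - s) / ε) (M ξ (φ 0))) : ℂ)‖ ≤ (2 * Real.pi)⁻¹ := by
  set t : ℝ := (s' - s) / ε with ht
  set g : Lp ℂ 2 (volume : Measure ℝ) := M ξ (φ 0) with hg
  set g' : Lp ℂ 2 (volume : Measure ℝ) := M ξ' (φ 0) with hg'
  -- the Fourier coefficient as an inner product
  have hft : ∀ (n : ℕ) (c : ℝ),
      ft (fun y => (hermiteFun n y : ℂ) * (hermiteFun 0 y : ℂ)) c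
        = ((Real.sqrt (2 * Real.pi) : ℂ))⁻¹ * (inner ℂ (φ n) (M c (φ 0)) : ℂ) := by
    intro n c
    rw [ft, MeasureTheory.L2.inner_def]
    congr 1
    refine (integral_congr_ae ?_).symm
    filter_upwards [hφ n, hφ 0, hM c (φ 0)] with y h1 h2 h3
    simp only [RCLike.inner_apply, h1, h3, h2]
    rw [Complex.conj_ofReal]
    ring
  -- eigenvalue phase
  set e : ℕ → ℂ := fun n => Complex.exp (-Complex.I * ((n:ℂ) + 1/2) * t) with he
  have hee : ∀ n, e n * (starRingEnd ℂ) (e n) = 1 := by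
    intro n
    have hz : (starRingEnd ℂ) (-Complex.I * ((n:ℂ) + 1/2) * (t:ℂ))
        = -(-Complex.I * ((n:ℂ) + 1/2) * (t:ℂ)) := by
      simp only [map_mul, map_neg, Complex.conj_I, map_add, Complex.conj_natCast,
        map_div₀, map_one, map_ofNat, Complex.conj_ofReal]
      ring
    rw [he]
    simp only
    rw [← Complex.exp_conj, hz, ← Complex.exp_add, add_neg_cancel, Complex.exp_zero]
  -- U t preserves inner products
  have hUinner : ∀ (x y : Lp ℂ 2 (volume : Measure ℝ)),
      (inner ℂ (U t x) (U t y) : ℂ) = inner ℂ x y := fun x y =>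
    LinearIsometry.inner_map_map ⟨(U t).toLinearMap, hUiso t⟩ x y
  have hUcoef : ∀ n, (inner ℂ (φ n) (U t g) : ℂ) = e n * inner ℂ (φ n) g := by
    intro n
    have h1 : (inner ℂ (U t (φ n)) (U t g) : ℂ) = inner ℂ (φ n) g := hUinner _ _
    rw [hU t n, inner_smul_left] at h1
    calc (inner ℂ (φ n) (U t g) : ℂ)
        = e n * ((starRingEnd ℂ) (e n) * inner ℂ (φ n) (U t g)) := by
          rw [← mul_assoc, hee n, one_mul]
      _ = e n * inner ℂ (φ n) g := by rw [h1]
  -- Hilbert basis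
  let b : HilbertBasis ℕ ℂ (Lp ℂ 2 (volume : Measure ℝ)) := HilbertBasis.mk hON hTot.ge
  have hb : ∀ n, b n = φ n := fun n => congrFun (HilbertBasis.coe_mk hON hTot.ge) n
  have hsum : HasSum (fun n => (inner ℂ g' (b n) : ℂ) * inner ℂ (b n) (U t g))
      (inner ℂ g' (U t g) : ℂ) := b.hasSum_inner_mul_inner g' (U t g)
  have h2pi : ((Real.sqrt (2 * Real.pi) : ℂ))⁻¹ * ((Real.sqrt (2 * Real.pi) : ℂ))⁻¹
      = ((2 * Real.pi : ℝ) : ℂ)⁻¹ := by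
    rw [← mul_inv, ← Complex.ofReal_mul, Real.mul_self_sqrt (by positivity)]
  -- norms of the modulated states
  have hnorm : ∀ c : ℝ, ‖M c (φ 0)‖ = 1 := by
    intro c
    have h1 : ‖M c (φ 0)‖ = ‖φ 0‖ := by
      rw [Lp.norm_def, Lp.norm_def]
      congr 1
      apply eLpNorm_congr_norm_ae
      filter_upwards [hM c (φ 0)] with y hy
      rw [hy, norm_mul]
      have : (-Complex.I * (c:ℂ) * (y:ℂ)) = ((-(c*y) : ℝ) : ℂ) * Complex.I := by
        push_cast; ring
      rw [this, Complex.norm_exp_ofReal_mul_I, one_mul]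
    rw [h1, hON.1 0]
  constructor
  · refine HasSum.congr_fun (hsum.mul_left (((2 * Real.pi : ℝ) : ℂ)⁻¹)) ?_
    intro n
    rw [hft n ξ, hft n ξ', hb n, hUcoef n, ← inner_conj_symm (φ n) g',
      map_mul, map_inv₀, Complex.conj_ofReal, Complex.conj_conj, ← h2pi]
    ring
  · rw [norm_mul]
    have hC : ‖(((2 * Real.pi : ℝ) : ℂ))⁻¹‖ = (2 * Real.pi)⁻¹ := by
      rw [norm_inv, Complex.norm_real, Real.norm_eq_abs,
        abs_of_pos (by positivity)]
    rw [hC]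
    calc (2 * Real.pi)⁻¹ * ‖(inner ℂ g' (U t g) : ℂ)‖
        ≤ (2 * Real.pi)⁻¹ * (‖g'‖ * ‖U t g‖) :=
          mul_le_mul_of_nonneg_left (norm_inner_le_norm g' (U t g)) (by positivity)
      _ = (2 * Real.pi)⁻¹ := by
          rw [hUiso, hg, hg', hnorm, hnorm]; ring
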